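/- For fixed x > 0 and α > -1, the function β ↦ μ(x, β, α) is log-concave on (-1, ∞): for all β₁, β₂ > -1 and all λ ∈ [0, 1], one has μ(x, λβ₁ + (1-λ)β₂, α) ≥ μ(x, β₁, α)^λ · μ(x, β₂, α)^(1-λ). -/

import Mathlib

set_option maxHeartbeats 1000000

open MeasureTheory Real Set

/-- The Volterra function `μ(x, β, α) = ∫₀^∞ x^(t+α) t^β / (Γ(t+α+1) Γ(β+1)) dt`. -/
noncomputable def volterraMu (x β α : ℝ) : ℝ :=
  ∫ t in Set.Ioi (0 : ℝ),
    x ^ (t + α) * t ^ β / (Real.Gamma (t + α + 1) * Real.Gamma (β + 1))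

namespace VolterraAux

open Filter

/-- the base function `f(t) = x^(t+α)/Γ(t+α+1)`. -/
noncomputable def f (x α t : ℝ) : ℝ := x ^ (t + α) / Real.Gamma (t + α + 1)

/-- the unnormalized moment integral. -/
noncomputable def F (x α β : ℝ) : ℝ := ∫ t in Ioi (0 : ℝ), f x α t * t ^ β

/-- normalized: `μ = F/Γ(β+1)`. -/
noncomputable def M (x α β : ℝ) : ℝ := F x α β / Real.Gamma (β + 1)

variable {x α : ℝ}

/-- crude lower bound on Gamma. -/
lemma gamma_lb {N y : ℝ} (hN : 1 ≤ N) (hy : 1 ≤ y) :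
    Real.exp (-(2 * N)) * N ^ y ≤ Real.Gamma y := by
  have hN0 : (0 : ℝ) < N := lt_of_lt_of_le one_pos hN
  have hy0 : (0 : ℝ) < y := lt_of_lt_of_le one_pos hy
  rw [Real.Gamma_eq_integral hy0]
  have hint : IntegrableOn (fun t : ℝ => Real.exp (-t) * t ^ (y - 1)) (Ioi 0) :=
    Real.GammaIntegral_convergent hy0
  have hsub : Ioc N (2 * N) ⊆ Ioi (0 : ℝ) := fun t ht => lt_trans hN0 ht.1
  have hmono : ∫ t in Ioc N (2 * N), Real.exp (-t) * t ^ (y - 1)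
      ≤ ∫ t in Ioi (0 : ℝ), Real.exp (-t) * t ^ (y - 1) := by
    apply setIntegral_mono_set hint
    · filter_upwards [self_mem_ae_restrict measurableSet_Ioi] with t ht
      exact mul_nonneg (Real.exp_pos _).le (Real.rpow_nonneg (le_of_lt ht) _)
    · exact HasSubset.Subset.eventuallyLE hsub
  refine le_trans ?_ hmono
  have hconst : ∀ t ∈ Ioc N (2 * N),
      Real.exp (-(2 * N)) * N ^ (y - 1) ≤ Real.exp (-t) * t ^ (y - 1) := by
    intro t ht
    have h1 : Real.exp (-(2 * N)) ≤ Real.exp (-t) := by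
      apply Real.exp_le_exp.2; linarith [ht.2]
    have h2 : N ^ (y - 1) ≤ t ^ (y - 1) :=
      Real.rpow_le_rpow hN0.le ht.1.le (by linarith)
    exact mul_le_mul h1 h2 (Real.rpow_nonneg hN0.le _) (Real.exp_pos _).le
  have hle : Real.exp (-(2 * N)) * N ^ (y - 1) * (volume (Ioc N (2 * N))).toReal
      ≤ ∫ t in Ioc N (2 * N), Real.exp (-t) * t ^ (y - 1) :=
    setIntegral_ge_of_const_le_real measurableSet_Ioc
      (by rw [Real.volume_Ioc]; exact ENNReal.ofReal_ne_top)
      hconst (hint.mono_set hsub)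
  have hvol : (volume (Ioc N (2 * N))).toReal = N := by
    rw [Real.volume_Ioc, ENNReal.toReal_ofReal (by linarith)]; ring
  rw [hvol] at hle
  refine le_trans (le_of_eq ?_) hle
  rw [mul_assoc, ← Real.rpow_add_one hN0.ne' (y - 1)]
  ring_nf

lemma f_pos (hx : 0 < x) (hα : -1 < α) {t : ℝ} (ht : 0 ≤ t) : 0 < f x α t := by
  have h1 : 0 < t + α + 1 := by linarith
  exact div_pos (Real.rpow_pos_of_pos hx _) (Real.Gamma_pos_of_pos h1)

lemma f_contOn (hx : 0 < x) (hα : -1 < α) : ContinuousOn (f x α) (Ici 0) := by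
  apply ContinuousOn.div
  · have : (fun t : ℝ => x ^ (t + α)) = fun t => Real.exp (Real.log x * (t + α)) := by
      funext t; rw [Real.rpow_def_of_pos hx]
    show ContinuousOn (fun t : ℝ => x ^ (t + α)) (Ici 0)
    rw [this]
    exact (Real.continuous_exp.comp (continuous_const.mul
      (continuous_id.add continuous_const))).continuousOn
  · intro t ht
    have h1 : 0 < t + α + 1 := by
      have := mem_Ici.1 ht; linarith
    have hc : ContinuousAt Real.Gamma (t + α + 1) := by
      apply (Real.differentiableAt_Gamma _).continuousAt
      intro m hcon
      have h2 : (0:ℝ) ≤ m := Nat.cast_nonneg m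
      rw [hcon] at h1; linarith
    have hc2 : ContinuousAt (Real.Gamma ∘ fun s : ℝ => s + α + 1) t :=
      ContinuousAt.comp (x := t) (f := fun s : ℝ => s + α + 1) (g := Real.Gamma)
        hc (by fun_prop)
    exact hc2.continuousWithinAt
  · intro t ht
    have h1 : 0 < t + α + 1 := by
      have := mem_Ici.1 ht; linarith
    exact (Real.Gamma_pos_of_pos h1).ne' 

/-- `f = exp L` pointwise. -/
lemma f_eq_exp (hx : 0 < x) (hα : -1 < α) {t : ℝ} (ht : 0 ≤ t) :
    f x α t = Real.exp (Real.log x * (t + α) - Real.log (Real.Gamma (t + α + 1))) := by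
  have h1 : 0 < t + α + 1 := by linarith
  rw [Real.exp_sub, Real.exp_log (Real.Gamma_pos_of_pos h1), ← Real.rpow_def_of_pos hx]
  rfl

lemma concaveOn_L (hx : 0 < x) (hα : -1 < α) :
    ConcaveOn ℝ (Ici 0)
      (fun t => Real.log x * (t + α) - Real.log (Real.Gamma (t + α + 1))) := by
  have haff : ConcaveOn ℝ (Ici (0:ℝ)) (fun t => Real.log x * (t + α)) := by
    refine ⟨convex_Ici 0, ?_⟩
    intro p _ q _ a b _ _ hab
    simp only [smul_eq_mul]
    apply le_of_eq
    linear_combination (Real.log x * α) * hab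
  have hconv : ConvexOn ℝ (Ici (0:ℝ)) (fun t => Real.log (Real.Gamma (t + α + 1))) := by
    have hcomp := Real.convexOn_log_Gamma.comp_affineMap
      (AffineMap.id ℝ ℝ + AffineMap.const ℝ ℝ (α + 1))
    have hsub : Ici (0:ℝ) ⊆ (AffineMap.id ℝ ℝ + AffineMap.const ℝ ℝ (α + 1)) ⁻¹' (Ioi 0) := by
      intro t ht
      simp only [mem_preimage, mem_Ioi, AffineMap.coe_add, AffineMap.coe_id,
        AffineMap.coe_const, Pi.add_apply, id_eq, Function.const_apply]
      have := mem_Ici.1 ht; linarith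
    have h2 := hcomp.subset hsub (convex_Ici 0)
    refine (show (fun t => Real.log (Real.Gamma (t + α + 1)))
        = (Real.log ∘ Real.Gamma) ∘ ⇑(AffineMap.id ℝ ℝ + AffineMap.const ℝ ℝ (α + 1)) from ?_) ▸ h2
    funext t
    simp only [Function.comp_apply, AffineMap.coe_add, AffineMap.coe_id,
      AffineMap.coe_const, Pi.add_apply, id_eq, Function.const_apply, add_assoc]
  exact haff.sub hconv

/-- the log-concavity consequence for products of `f`. -/
lemma f_mul_f_le (hx : 0 < x) (hα : -1 < α) {r p q s : ℝ} (hr : 0 < r)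
    (hrp : r ≤ p) (hrq : r ≤ q) (hsum : p + q = r + s) :
    f x α r * f x α s ≤ f x α p * f x α q := by
  set L : ℝ → ℝ := fun t => Real.log x * (t + α) - Real.log (Real.Gamma (t + α + 1)) with hL
  have hconc := concaveOn_L hx hα
  have hs : q ≤ s := by linarith
  have hs0 : 0 < s := lt_of_lt_of_le hr (le_trans hrq hs)
  have key : L r + L s ≤ L p + L q := by
    rcases eq_or_lt_of_le hrp with heq | hlt
    · have hqs : q = s := by linarith
      rw [← heq, hqs]
    · have hD : 0 < s - r := by linarith
      set a : ℝ := (s - p) / (s - r) with ha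
      have ha0 : 0 ≤ a := div_nonneg (by linarith) hD.le
      have ha1 : a ≤ 1 := by
        rw [div_le_one hD]; linarith
      have hDne := hD.ne'
      have hc : a * (s - r) = s - p := div_mul_cancel₀ _ hDne
      have h1 : a • r + (1 - a) • s = p := by
        simp only [smul_eq_mul]
        nlinarith [hc]
      have h2 : (1 - a) • r + a • s = q := by
        have h1' := h1
        simp only [smul_eq_mul] at h1' ⊢
        linarith
      have hp1 := hconc.2 (mem_Ici.2 hr.le) (mem_Ici.2 hs0.le) ha0 (by linarith : (0:ℝ) ≤ 1 - a)
        (by ring)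
      have hp2 := hconc.2 (mem_Ici.2 hr.le) (mem_Ici.2 hs0.le) (by linarith : (0:ℝ) ≤ 1 - a)
        ha0 (by ring)
      rw [h1] at hp1
      rw [h2] at hp2
      simp only [smul_eq_mul] at hp1 hp2
      simp only [hL]
      linarith [hp1, hp2]
  have e1 := f_eq_exp hx hα (le_of_lt hr)
  have e2 := f_eq_exp hx hα (le_of_lt hs0)
  have e3 := f_eq_exp hx hα (le_of_lt (lt_of_lt_of_le hr hrp))
  have e4 := f_eq_exp hx hα (le_of_lt (lt_of_lt_of_le hr hrq))
  rw [e1, e2, e3, e4, ← Real.exp_add, ← Real.exp_add]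
  exact Real.exp_le_exp.2 key

lemma integrable_f_rpow (hx : 0 < x) (hα : -1 < α) {β : ℝ} (hβ : -1 < β) :
    IntegrableOn (fun t => f x α t * t ^ β) (Ioi (0 : ℝ)) := by
  have hcont : ContinuousOn (fun t => f x α t * t ^ β) (Ioi 0) := by
    apply ((f_contOn hx hα).mono Ioi_subset_Ici_self).mul
    intro t ht
    exact (Real.continuousAt_rpow_const t β (Or.inl (ne_of_gt ht))).continuousWithinAt
  rw [← Ioc_union_Ioi_eq_Ioi (zero_le_one : (0:ℝ) ≤ 1)]
  apply IntegrableOn.union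
  · -- near zero
    obtain ⟨C, hC⟩ := isCompact_Icc.exists_bound_of_continuousOn
      ((f_contOn hx hα).mono (Icc_subset_Ici_self : Icc (0:ℝ) 1 ⊆ Ici 0))
    have hrint : IntegrableOn (fun t : ℝ => t ^ β) (Ioc (0:ℝ) 1) :=
      (intervalIntegrable_iff_integrableOn_Ioc_of_le (zero_le_one : (0:ℝ) ≤ 1)).1
        (intervalIntegral.intervalIntegrable_rpow' hβ)
    apply Integrable.mono' (hrint.const_mul C)
    · exact (hcont.mono Ioc_subset_Ioi_self).aestronglyMeasurable measurableSet_Ioc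
    · filter_upwards [self_mem_ae_restrict measurableSet_Ioc] with t ht
      have ht0 : 0 < t := ht.1
      have hfb : ‖f x α t‖ ≤ C := hC t ⟨ht0.le, ht.2⟩
      rw [norm_mul, Real.norm_of_nonneg (Real.rpow_nonneg ht0.le β)]
      exact mul_le_mul_of_nonneg_right hfb (Real.rpow_nonneg ht0.le β)
  · -- near infinity
    set c : ℝ := |Real.log x| + |β| + 1 with hc
    have hc1 : 1 ≤ c := by
      have h0 : 0 ≤ |Real.log x| + |β| := by positivity
      rw [hc]; linarith
    set K : ℝ := Real.exp (α * Real.log x + 2 * Real.exp c - (α + 1) * c) with hK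
    have hint : IntegrableOn (fun t : ℝ => K * Real.exp (-t)) (Ioi 1) := by
      have h0 := exp_neg_integrableOn_Ioi (1:ℝ) (zero_lt_one (α := ℝ))
      have he : (fun t : ℝ => Real.exp (-1 * t)) = fun t : ℝ => Real.exp (-t) := by
        funext t; ring_nf
      rw [he] at h0
      exact h0.const_mul K
    apply Integrable.mono' hint
    · exact (hcont.mono (Ioi_subset_Ioi (by norm_num))).aestronglyMeasurable measurableSet_Ioi
    · filter_upwards [self_mem_ae_restrict measurableSet_Ioi] with t ht
      have ht1 : (1:ℝ) ≤ t := le_of_lt ht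
      have ht0 : (0:ℝ) < t := lt_of_lt_of_le zero_lt_one ht1
      have htα : 1 ≤ t + α + 1 := by linarith
      have hγ := gamma_lb (Real.one_le_exp (by linarith : (0:ℝ) ≤ c)) htα
      have hΓpos : 0 < Real.Gamma (t + α + 1) := Real.Gamma_pos_of_pos (by linarith)
      have hnum : x ^ (t + α) * t ^ β
          ≤ Real.exp (t * |Real.log x| + α * Real.log x + |β| * t) := by
        rw [Real.rpow_def_of_pos hx, Real.rpow_def_of_pos ht0, ← Real.exp_add]
        apply Real.exp_le_exp.2
        have h1 : Real.log x * t ≤ |Real.log x| * t :=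
          mul_le_mul_of_nonneg_right (le_abs_self _) ht0.le
        have h2 : Real.log t * β ≤ |β| * t := by
          have hlt : Real.log t ≤ t := (Real.log_le_sub_one_of_pos ht0).trans (by linarith)
          have hl0 : 0 ≤ Real.log t := Real.log_nonneg ht1
          calc Real.log t * β ≤ Real.log t * |β| :=
                mul_le_mul_of_nonneg_left (le_abs_self β) hl0
            _ ≤ t * |β| := mul_le_mul_of_nonneg_right hlt (abs_nonneg β)
            _ = |β| * t := mul_comm _ _
        nlinarith [h1, h2]
      have hden : Real.exp (-(2 * Real.exp c) + (t + α + 1) * c)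
          ≤ Real.Gamma (t + α + 1) := by
        refine le_trans (le_of_eq ?_) hγ
        rw [Real.exp_add]
        congr 1
        rw [Real.rpow_def_of_pos (Real.exp_pos c), Real.log_exp]
        ring_nf
      have hfle : f x α t * t ^ β ≤ K * Real.exp (-t) := by
        have h1 : f x α t * t ^ β = x ^ (t + α) * t ^ β / Real.Gamma (t + α + 1) := by
          rw [f]; ring
        rw [h1]
        have h2 : x ^ (t + α) * t ^ β / Real.Gamma (t + α + 1)
            ≤ Real.exp (t * |Real.log x| + α * Real.log x + |β| * t) /
              Real.exp (-(2 * Real.exp c) + (t + α + 1) * c) :=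
          div_le_div₀ (Real.exp_pos _).le hnum (Real.exp_pos _) hden
        refine le_trans h2 (le_of_eq ?_)
        rw [← Real.exp_sub, hK, ← Real.exp_add]
        congr 1
        rw [hc]; ring
      have hnn : 0 ≤ f x α t * t ^ β :=
        mul_nonneg (f_pos hx hα ht0.le).le (Real.rpow_nonneg ht0.le β)
      rw [Real.norm_of_nonneg hnn]
      exact hfle

lemma F_pos (hx : 0 < x) (hα : -1 < α) {β : ℝ} (hβ : -1 < β) : 0 < F x α β := by
  have hnn : 0 ≤ᵐ[volume.restrict (Ioi (0:ℝ))] fun t => f x α t * t ^ β := by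
    filter_upwards [self_mem_ae_restrict measurableSet_Ioi] with t ht
    exact mul_nonneg (f_pos hx hα (le_of_lt ht)).le (Real.rpow_nonneg (le_of_lt ht) β)
  rw [F, setIntegral_pos_iff_support_of_nonneg_ae hnn (integrable_f_rpow hx hα hβ)]
  have hsub : Ioi (0:ℝ) ⊆ Function.support (fun t => f x α t * t ^ β) ∩ Ioi 0 := by
    intro t ht
    refine ⟨Function.mem_support.2 ?_, ht⟩
    exact (mul_pos (f_pos hx hα (le_of_lt ht)) (Real.rpow_pos_of_pos ht β)).ne'
  have h2 : volume (Ioi (0:ℝ)) ≤ volume (Function.support (fun t => f x α t * t ^ β) ∩ Ioi 0) :=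
    measure_mono hsub
  rw [Real.volume_Ioi] at h2
  exact lt_of_lt_of_le (by simp : (0:ENNReal) < ⊤) h2

lemma M_pos (hx : 0 < x) (hα : -1 < α) {β : ℝ} (hβ : -1 < β) : 0 < M x α β :=
  div_pos (F_pos hx hα hβ) (Real.Gamma_pos_of_pos (by linarith))

/-- real Beta integral. -/
lemma beta_integral {p q : ℝ} (hp : -1 < p) (hq : -1 < q) :
    ∫ σ in Ioo (0 : ℝ) 1, σ ^ p * (1 - σ) ^ q
      = Real.Gamma (p + 1) * Real.Gamma (q + 1) / Real.Gamma (p + q + 2) := by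
  have hp0 : (0:ℝ) < p + 1 := by linarith
  have hq0 : (0:ℝ) < q + 1 := by linarith
  have hkey := Complex.Gamma_mul_Gamma_eq_betaIntegral
    (s := ((p+1 : ℝ) : ℂ)) (t := ((q+1 : ℝ) : ℂ))
    (by simpa using hp0) (by simpa using hq0)
  have hbeta : Complex.betaIntegral ((p+1 : ℝ) : ℂ) ((q+1 : ℝ) : ℂ)
      = ((∫ σ in (0:ℝ)..1, σ ^ p * (1 - σ) ^ q : ℝ) : ℂ) := by
    rw [Complex.betaIntegral, ← intervalIntegral.integral_ofReal]
    apply intervalIntegral.integral_congr_ae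
    apply Filter.Eventually.of_forall
    intro σ hmem
    rw [uIoc_of_le (zero_le_one : (0:ℝ) ≤ 1)] at hmem
    have hσ0 : (0:ℝ) ≤ σ := le_of_lt hmem.1
    have hσ' : σ ≤ 1 := hmem.2
    have hσ1 : (0:ℝ) ≤ 1 - σ := by linarith
    rw [Complex.ofReal_mul, Complex.ofReal_cpow hσ0, Complex.ofReal_cpow hσ1]
    push_cast
    ring_nf
  rw [hbeta] at hkey
  have hsum : ((p+1 : ℝ) : ℂ) + ((q+1 : ℝ) : ℂ) = ((p+q+2 : ℝ) : ℂ) := by push_cast; ring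
  rw [hsum, Complex.Gamma_ofReal, Complex.Gamma_ofReal, Complex.Gamma_ofReal] at hkey
  have hreal : Real.Gamma (p+1) * Real.Gamma (q+1)
      = Real.Gamma (p+q+2) * ∫ σ in (0:ℝ)..1, σ ^ p * (1 - σ) ^ q := by
    exact_mod_cast hkey
  have hΓ : (0:ℝ) < Real.Gamma (p+q+2) := Real.Gamma_pos_of_pos (by linarith)
  have hIoo : ∫ σ in Ioo (0:ℝ) 1, σ ^ p * (1 - σ) ^ q
      = ∫ σ in (0:ℝ)..1, σ ^ p * (1 - σ) ^ q := by
    rw [intervalIntegral.integral_of_le (zero_le_one : (0:ℝ) ≤ 1),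
      integral_Ioc_eq_integral_Ioo]
  rw [hIoo, eq_div_iff hΓ.ne']
  linarith [hreal]

lemma beta_integrable {p q : ℝ} (hp : -1 < p) (hq : -1 < q) :
    IntegrableOn (fun σ => σ ^ p * (1 - σ) ^ q) (Ioo (0 : ℝ) 1) := by
  have half : ∀ p' q' : ℝ, -1 < p' →
      IntegrableOn (fun σ => σ ^ p' * (1 - σ) ^ q') (Ioc (0:ℝ) (1/2)) := by
    intro p' q' hp'
    have hrint : IntegrableOn (fun t : ℝ => t ^ p') (Ioc (0:ℝ) (1/2)) :=
      (intervalIntegrable_iff_integrableOn_Ioc_of_le (by norm_num : (0:ℝ) ≤ 1/2)).1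
        (intervalIntegral.intervalIntegrable_rpow' hp')
    set C : ℝ := ((1:ℝ)/2) ^ q' + 1 with hC
    apply Integrable.mono' (hrint.const_mul C)
    · apply ContinuousOn.aestronglyMeasurable _ measurableSet_Ioc
      apply ContinuousOn.mul
      · intro t ht
        exact (Real.continuousAt_rpow_const t p' (Or.inl (ne_of_gt ht.1))).continuousWithinAt
      · intro t ht
        have h1 : (1:ℝ) - t ≠ 0 := by
          intro hcon
          have ht1 : t = 1 := by linarith
          have := ht.2
          rw [ht1] at this
          norm_num at this
        have hcont1 : ContinuousAt (fun s : ℝ => s ^ q') (1 - t) :=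
          Real.continuousAt_rpow_const _ q' (Or.inl h1)
        have hcont2 : ContinuousAt (fun s : ℝ => (1:ℝ) - s) t := by fun_prop
        exact (hcont1.comp hcont2).continuousWithinAt
    · filter_upwards [self_mem_ae_restrict measurableSet_Ioc] with t ht
      have ht0 : 0 < t := ht.1
      have ht2 : t ≤ 1/2 := ht.2
      have hb1 : (1:ℝ)/2 ≤ 1 - t := by linarith
      have hb0 : (0:ℝ) < 1/2 := by norm_num
      have hbb : (1 - t) ^ q' ≤ C := by
        rcases le_or_gt 0 q' with hq0 | hq0
        · have h1 : (1 - t) ^ q' ≤ 1 ^ q' :=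
            Real.rpow_le_rpow (by linarith) (by linarith) hq0
          have h2 : (0:ℝ) < ((1:ℝ)/2) ^ q' := Real.rpow_pos_of_pos hb0 q'
          rw [Real.one_rpow] at h1
          rw [hC]; linarith
        · have h1 : (1 - t) ^ q' ≤ ((1:ℝ)/2) ^ q' :=
            Real.rpow_le_rpow_of_nonpos hb0 hb1 hq0.le
          rw [hC]; linarith
      have hnn : 0 ≤ t ^ p' := Real.rpow_nonneg ht0.le p'
      rw [Real.norm_of_nonneg (mul_nonneg hnn (Real.rpow_nonneg (by linarith) q'))]
      calc t ^ p' * (1 - t) ^ q' ≤ t ^ p' * C := mul_le_mul_of_nonneg_left hbb hnn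
        _ = C * t ^ p' := mul_comm _ _
  have hA : IntegrableOn (fun σ => σ ^ p * (1 - σ) ^ q) (Ioc (0:ℝ) (1/2)) := half p q hp
  have hB0 : IntegrableOn (fun σ => σ ^ q * (1 - σ) ^ p) (Ioc (0:ℝ) (1/2)) := half q p hq
  have hB1 : IntervalIntegrable (fun σ => σ ^ q * (1 - σ) ^ p) volume 0 (1/2) :=
    (intervalIntegrable_iff_integrableOn_Ioc_of_le (by norm_num : (0:ℝ) ≤ 1/2)).2 hB0
  have hB2 := (hB1.comp_sub_left 1).symm
  norm_num at hB2
  have hB3 : IntegrableOn (fun σ => (1 - σ) ^ q * σ ^ p) (Ioc (1/2 : ℝ) 1) :=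
    (intervalIntegrable_iff_integrableOn_Ioc_of_le (by norm_num : (1/2:ℝ) ≤ 1)).1 hB2
  have hB : IntegrableOn (fun σ => σ ^ p * (1 - σ) ^ q) (Ioc (1/2:ℝ) 1) := by
    apply hB3.congr_fun _ measurableSet_Ioc
    intro σ hσ
    exact mul_comm _ _
  have hunion : IntegrableOn (fun σ => σ ^ p * (1 - σ) ^ q)
      (Ioc (0:ℝ) (1/2) ∪ Ioc (1/2:ℝ) 1) := hA.union hB
  apply hunion.mono_set
  rw [Ioc_union_Ioc_eq_Ioc (by norm_num : (0:ℝ) ≤ 1/2) (by norm_num : (1/2:ℝ) ≤ 1)]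
  exact Ioo_subset_Ioc_self

/-- reflection invariance of integrals on `(0,1)`. -/
lemma refl_integral (G : ℝ → ℝ) :
    ∫ σ in Ioo (0 : ℝ) 1, G (1 - σ) = ∫ σ in Ioo (0 : ℝ) 1, G σ := by
  rw [← integral_Ioc_eq_integral_Ioo, ← integral_Ioc_eq_integral_Ioo,
      ← intervalIntegral.integral_of_le (zero_le_one : (0:ℝ) ≤ 1),
      ← intervalIntegral.integral_of_le (zero_le_one : (0:ℝ) ≤ 1),
      intervalIntegral.integral_comp_sub_left G 1]
  norm_num

lemma refl_integrableOn {G : ℝ → ℝ} (hG : IntegrableOn G (Ioo (0 : ℝ) 1)) :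
    IntegrableOn (fun σ => G (1 - σ)) (Ioo (0 : ℝ) 1) := by
  have h1 : IntegrableOn G (Ioc (0:ℝ) 1) := hG.congr_set_ae Ioo_ae_eq_Ioc.symm
  have h2 : IntervalIntegrable G volume 0 1 :=
    (intervalIntegrable_iff_integrableOn_Ioc_of_le (zero_le_one : (0:ℝ) ≤ 1)).2 h1
  have h3 := (h2.comp_sub_left 1).symm
  norm_num at h3
  have h4 : IntegrableOn (fun σ => G (1 - σ)) (Ioc (0:ℝ) 1) :=
    (intervalIntegrable_iff_integrableOn_Ioc_of_le (zero_le_one : (0:ℝ) ≤ 1)).1 h3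
  exact h4.congr_set_ae Ioo_ae_eq_Ioc

section Slice

/-- slice factor. -/
noncomputable def g (x α w σ : ℝ) : ℝ := f x α (w * σ) * f x α (w * (1 - σ))

/-- symmetric kernel. -/
noncomputable def hker (β₁ β₂ σ : ℝ) : ℝ :=
  (σ ^ β₁ * (1 - σ) ^ β₂ + σ ^ β₂ * (1 - σ) ^ β₁) / 2

/-- symmetric weight. -/
noncomputable def mker (β₁ β₂ σ : ℝ) : ℝ :=
  σ ^ ((β₁ + β₂) / 2) * (1 - σ) ^ ((β₁ + β₂) / 2)

variable {β₁ β₂ : ℝ}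

/-- the two monotonicity facts along the ordering `σ(1-σ)`. -/
lemma mono_pair (hx : 0 < x) (hα : -1 < α) {w σ τ : ℝ} (hw : 0 < w)
    (hσ : σ ∈ Ioo (0 : ℝ) 1) (hτ : τ ∈ Ioo (0 : ℝ) 1)
    (hu : τ * (1 - τ) ≤ σ * (1 - σ)) :
    g x α w τ ≤ g x α w σ ∧
      hker β₁ β₂ σ * mker β₁ β₂ τ ≤ hker β₁ β₂ τ * mker β₁ β₂ σ := by
  have hσ0 : 0 < σ := hσ.1
  have hσ1 : 0 < 1 - σ := by linarith [hσ.2]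
  have hτ0 : 0 < τ := hτ.1
  have hτ1 : 0 < 1 - τ := by linarith [hτ.2]
  set σ' : ℝ := min σ (1 - σ) with hσ'def
  set τ' : ℝ := min τ (1 - τ) with hτ'def
  have hσ'0 : 0 < σ' := lt_min hσ0 hσ1
  have hτ'0 : 0 < τ' := lt_min hτ0 hτ1
  have hσ'h : σ' ≤ 1/2 := by
    rcases le_total σ (1 - σ) with h | h
    · rw [hσ'def, min_eq_left h]; linarith
    · rw [hσ'def, min_eq_right h]; linarith
  have hτ'h : τ' ≤ 1/2 := by
    rcases le_total τ (1 - τ) with h | h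
    · rw [hτ'def, min_eq_left h]; linarith
    · rw [hτ'def, min_eq_right h]; linarith
  have huσ : σ' * (1 - σ') = σ * (1 - σ) := by
    rcases le_total σ (1 - σ) with h | h
    · rw [hσ'def, min_eq_left h]
    · rw [hσ'def, min_eq_right h]; ring
  have huτ : τ' * (1 - τ') = τ * (1 - τ) := by
    rcases le_total τ (1 - τ) with h | h
    · rw [hτ'def, min_eq_left h]
    · rw [hτ'def, min_eq_right h]; ring
  have hstep : τ' ≤ σ' := by
    by_contra hcon
    push_neg at hcon
    have : σ' * (1 - σ') < τ' * (1 - τ') := by nlinarith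
    rw [huσ, huτ] at this
    linarith
  constructor
  · -- g part
    have hgτ : g x α w τ = f x α (w * τ') * f x α (w * (1 - τ')) := by
      rcases le_total τ (1 - τ) with h | h
      · rw [hτ'def, min_eq_left h]; rfl
      · rw [hτ'def, min_eq_right h, g]
        have he : 1 - (1 - τ) = τ := by ring
        rw [he, mul_comm]
    rw [hgτ, g]
    apply f_mul_f_le hx hα (mul_pos hw hτ'0)
    · apply mul_le_mul_of_nonneg_left _ hw.le
      exact le_trans hstep (min_le_left _ _)
    · apply mul_le_mul_of_nonneg_left _ hw.le
      exact le_trans hstep (min_le_right _ _)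
    · ring
  · -- h part
    set δ : ℝ := (β₁ - β₂) / 2 with hδ
    have hrep : ∀ v : ℝ, 0 < v → 0 < 1 - v → hker β₁ β₂ v
        = mker β₁ β₂ v * Real.cosh (δ * (Real.log v - Real.log (1 - v))) := by
      intro v hv0 hv1
      have e1 : v ^ β₁ * (1 - v) ^ β₂
          = mker β₁ β₂ v * Real.exp (δ * (Real.log v - Real.log (1 - v))) := by
        rw [mker, Real.rpow_def_of_pos hv0, Real.rpow_def_of_pos hv1,
          Real.rpow_def_of_pos hv0, Real.rpow_def_of_pos hv1,
          ← Real.exp_add, ← Real.exp_add, ← Real.exp_add]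
        congr 1
        rw [hδ]; ring
      have e2 : v ^ β₂ * (1 - v) ^ β₁
          = mker β₁ β₂ v * Real.exp (-(δ * (Real.log v - Real.log (1 - v)))) := by
        rw [mker, Real.rpow_def_of_pos hv0, Real.rpow_def_of_pos hv1,
          Real.rpow_def_of_pos hv0, Real.rpow_def_of_pos hv1,
          ← Real.exp_add, ← Real.exp_add, ← Real.exp_add]
        congr 1
        rw [hδ]; ring
      rw [hker, e1, e2, Real.cosh_eq]
      ring
    have hcoshval : ∀ v : ℝ, 0 < v → 0 < 1 - v →
        Real.cosh (Real.log v - Real.log (1 - v)) = (v / (1 - v) + (1 - v) / v) / 2 := by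
      intro v hv0 hv1
      rw [Real.cosh_eq, neg_sub, Real.exp_sub, Real.exp_sub,
        Real.exp_log hv0, Real.exp_log hv1]
    have hcosh_base : Real.cosh (Real.log σ - Real.log (1 - σ))
        ≤ Real.cosh (Real.log τ - Real.log (1 - τ)) := by
      rw [hcoshval σ hσ0 hσ1, hcoshval τ hτ0 hτ1]
      have h1 : σ / (1 - σ) + (1 - σ) / σ ≤ τ / (1 - τ) + (1 - τ) / τ := by
        rw [div_add_div _ _ hσ1.ne' hσ0.ne', div_add_div _ _ hτ1.ne' hτ0.ne',
          div_le_div_iff₀ (by positivity) (by positivity)]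
        nlinarith [hu]
      linarith
    have habs : |Real.log σ - Real.log (1 - σ)| ≤ |Real.log τ - Real.log (1 - τ)| :=
      Real.cosh_le_cosh.1 hcosh_base
    have hcosh : Real.cosh (δ * (Real.log σ - Real.log (1 - σ)))
        ≤ Real.cosh (δ * (Real.log τ - Real.log (1 - τ))) := by
      apply Real.cosh_le_cosh.2
      rw [abs_mul, abs_mul]
      exact mul_le_mul_of_nonneg_left habs (abs_nonneg δ)
    have hmσ : 0 < mker β₁ β₂ σ := by
      rw [mker]
      exact mul_pos (Real.rpow_pos_of_pos hσ0 _) (Real.rpow_pos_of_pos hσ1 _)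
    have hmτ : 0 < mker β₁ β₂ τ := by
      rw [mker]
      exact mul_pos (Real.rpow_pos_of_pos hτ0 _) (Real.rpow_pos_of_pos hτ1 _)
    rw [hrep σ hσ0 hσ1, hrep τ hτ0 hτ1]
    have hch0 : 0 ≤ Real.cosh (δ * (Real.log σ - Real.log (1 - σ))) :=
      (Real.cosh_pos _).le
    calc mker β₁ β₂ σ * Real.cosh (δ * (Real.log σ - Real.log (1 - σ))) * mker β₁ β₂ τ
        ≤ mker β₁ β₂ σ * Real.cosh (δ * (Real.log τ - Real.log (1 - τ))) * mker β₁ β₂ τ := by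
          apply mul_le_mul_of_nonneg_right _ hmτ.le
          exact mul_le_mul_of_nonneg_left hcosh hmσ.le
      _ = mker β₁ β₂ τ * Real.cosh (δ * (Real.log τ - Real.log (1 - τ))) * mker β₁ β₂ σ := by
          ring

lemma key_pointwise (hx : 0 < x) (hα : -1 < α) {w σ τ : ℝ} (hw : 0 < w)
    (hσ : σ ∈ Ioo (0 : ℝ) 1) (hτ : τ ∈ Ioo (0 : ℝ) 1) :
    0 ≤ (g x α w σ - g x α w τ) *
      (hker β₁ β₂ τ * mker β₁ β₂ σ - hker β₁ β₂ σ * mker β₁ β₂ τ) := by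
  rcases le_total (τ * (1 - τ)) (σ * (1 - σ)) with h | h
  · obtain ⟨h1, h2⟩ := mono_pair (β₁ := β₁) (β₂ := β₂) hx hα hw hσ hτ h
    exact mul_nonneg (by linarith) (by linarith)
  · obtain ⟨h1, h2⟩ := mono_pair (β₁ := β₁) (β₂ := β₂) hx hα hw hτ hσ h
    have := mul_nonneg (a := g x α w τ - g x α w σ)
      (b := hker β₁ β₂ σ * mker β₁ β₂ τ - hker β₁ β₂ τ * mker β₁ β₂ σ)
      (by linarith) (by linarith)
    nlinarith [this]

/-- Chebyshev correlation inequality on the slice. -/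
lemma slice_chebyshev (hx : 0 < x) (hα : -1 < α) (hβ₁ : -1 < β₁) (hβ₂ : -1 < β₂)
    {w : ℝ} (hw : 0 < w) :
    (∫ σ in Ioo (0 : ℝ) 1, g x α w σ * hker β₁ β₂ σ) *
        (∫ σ in Ioo (0 : ℝ) 1, mker β₁ β₂ σ) ≤
      (∫ σ in Ioo (0 : ℝ) 1, g x α w σ * mker β₁ β₂ σ) *
        (∫ σ in Ioo (0 : ℝ) 1, hker β₁ β₂ σ) := by
  have hb : -1 < (β₁ + β₂) / 2 := by linarith
  have hIm : IntegrableOn (fun σ => mker β₁ β₂ σ) (Ioo (0:ℝ) 1) :=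
    beta_integrable hb hb
  have hIh : IntegrableOn (fun σ => hker β₁ β₂ σ) (Ioo (0:ℝ) 1) := by
    have h1 := beta_integrable hβ₁ hβ₂
    have h2 := beta_integrable hβ₂ hβ₁
    exact (h1.add h2).div_const 2
  have hgmeas : AEStronglyMeasurable (fun σ => g x α w σ)
      (volume.restrict (Ioo (0:ℝ) 1)) := by
    apply ContinuousOn.aestronglyMeasurable _ measurableSet_Ioo
    apply ContinuousOn.mul
    · apply (f_contOn hx hα).comp (continuous_const.mul continuous_id).continuousOn
      intro σ hσ
      exact mul_nonneg hw.le hσ.1.le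
    · apply (f_contOn hx hα).comp
        (continuous_const.mul (continuous_const.sub continuous_id)).continuousOn
      intro σ hσ
      have : (0:ℝ) ≤ 1 - σ := by linarith [hσ.2]
      exact mul_nonneg hw.le this
  obtain ⟨C, hC⟩ := (isCompact_Icc (a := (0:ℝ)) (b := w)).exists_bound_of_continuousOn
    ((f_contOn hx hα).mono (fun t ht => ht.1))
  have hgbd : ∀ᵐ σ ∂(volume.restrict (Ioo (0:ℝ) 1)), ‖g x α w σ‖ ≤ C * C := by
    filter_upwards [self_mem_ae_restrict measurableSet_Ioo] with σ hσ
    have hm1 : w * σ ∈ Icc (0:ℝ) w := by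
      constructor
      · exact mul_nonneg hw.le hσ.1.le
      · nlinarith [hσ.2]
    have hm2 : w * (1 - σ) ∈ Icc (0:ℝ) w := by
      constructor
      · have : (0:ℝ) ≤ 1 - σ := by linarith [hσ.2]
        exact mul_nonneg hw.le this
      · nlinarith [hσ.1]
    have h1 : ‖f x α (w * σ)‖ ≤ C := hC _ hm1
    have h2 : ‖f x α (w * (1 - σ))‖ ≤ C := hC _ hm2
    have hC0 : 0 ≤ C := le_trans (norm_nonneg _) h1
    show ‖f x α (w * σ) * f x α (w * (1 - σ))‖ ≤ C * C
    rw [norm_mul]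
    exact mul_le_mul h1 h2 (norm_nonneg _) hC0
  have hIgh : IntegrableOn (fun σ => g x α w σ * hker β₁ β₂ σ) (Ioo (0:ℝ) 1) :=
    hIh.bdd_mul hgmeas hgbd
  have hIgm : IntegrableOn (fun σ => g x α w σ * mker β₁ β₂ σ) (Ioo (0:ℝ) 1) :=
    hIm.bdd_mul hgmeas hgbd
  -- outer nonnegativity
  have houter : 0 ≤ ∫ σ in Ioo (0:ℝ) 1,
      ((g x α w σ * mker β₁ β₂ σ) * (∫ τ in Ioo (0:ℝ) 1, hker β₁ β₂ τ)
        - (g x α w σ * hker β₁ β₂ σ) * (∫ τ in Ioo (0:ℝ) 1, mker β₁ β₂ τ)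
        - (mker β₁ β₂ σ * (∫ τ in Ioo (0:ℝ) 1, g x α w τ * hker β₁ β₂ τ)
          - hker β₁ β₂ σ * (∫ τ in Ioo (0:ℝ) 1, g x α w τ * mker β₁ β₂ τ))) := by
    apply setIntegral_nonneg measurableSet_Ioo
    intro σ hσ
    have hinner : ∫ τ in Ioo (0:ℝ) 1,
        (g x α w σ - g x α w τ) * (hker β₁ β₂ τ * mker β₁ β₂ σ - hker β₁ β₂ σ * mker β₁ β₂ τ)
        = (g x α w σ * mker β₁ β₂ σ) * (∫ τ in Ioo (0:ℝ) 1, hker β₁ β₂ τ)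
          - (g x α w σ * hker β₁ β₂ σ) * (∫ τ in Ioo (0:ℝ) 1, mker β₁ β₂ τ)
          - (mker β₁ β₂ σ * (∫ τ in Ioo (0:ℝ) 1, g x α w τ * hker β₁ β₂ τ)
            - hker β₁ β₂ σ * (∫ τ in Ioo (0:ℝ) 1, g x α w τ * mker β₁ β₂ τ)) := by
      have e : (fun τ => (g x α w σ - g x α w τ) *
            (hker β₁ β₂ τ * mker β₁ β₂ σ - hker β₁ β₂ σ * mker β₁ β₂ τ))
          = fun τ => ((g x α w σ * mker β₁ β₂ σ) * hker β₁ β₂ τ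
              - (g x α w σ * hker β₁ β₂ σ) * mker β₁ β₂ τ)
            - (mker β₁ β₂ σ * (g x α w τ * hker β₁ β₂ τ)
              - hker β₁ β₂ σ * (g x α w τ * mker β₁ β₂ τ)) :=
        funext fun τ => by ring
      have i1 : Integrable (fun τ => (g x α w σ * mker β₁ β₂ σ) * hker β₁ β₂ τ)
          (volume.restrict (Ioo (0:ℝ) 1)) := hIh.const_mul _
      have i2 : Integrable (fun τ => (g x α w σ * hker β₁ β₂ σ) * mker β₁ β₂ τ)
          (volume.restrict (Ioo (0:ℝ) 1)) := hIm.const_mul _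
      have i3 : Integrable (fun τ => mker β₁ β₂ σ * (g x α w τ * hker β₁ β₂ τ))
          (volume.restrict (Ioo (0:ℝ) 1)) := hIgh.const_mul _
      have i4 : Integrable (fun τ => hker β₁ β₂ σ * (g x α w τ * mker β₁ β₂ τ))
          (volume.restrict (Ioo (0:ℝ) 1)) := hIgm.const_mul _
      have i12 : Integrable (fun τ => (g x α w σ * mker β₁ β₂ σ) * hker β₁ β₂ τ
          - (g x α w σ * hker β₁ β₂ σ) * mker β₁ β₂ τ)
          (volume.restrict (Ioo (0:ℝ) 1)) := i1.sub i2
      have i34 : Integrable (fun τ => mker β₁ β₂ σ * (g x α w τ * hker β₁ β₂ τ)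
          - hker β₁ β₂ σ * (g x α w τ * mker β₁ β₂ τ))
          (volume.restrict (Ioo (0:ℝ) 1)) := i3.sub i4
      rw [e, integral_sub i12 i34, integral_sub i1 i2, integral_sub i3 i4,
        integral_const_mul, integral_const_mul, integral_const_mul, integral_const_mul]
    rw [← hinner]
    apply setIntegral_nonneg measurableSet_Ioo
    intro τ hτ
    exact key_pointwise hx hα hw hσ hτ
  -- evaluate the outer integral
  have hsplit : ∫ σ in Ioo (0:ℝ) 1,
      ((g x α w σ * mker β₁ β₂ σ) * (∫ τ in Ioo (0:ℝ) 1, hker β₁ β₂ τ)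
        - (g x α w σ * hker β₁ β₂ σ) * (∫ τ in Ioo (0:ℝ) 1, mker β₁ β₂ τ)
        - (mker β₁ β₂ σ * (∫ τ in Ioo (0:ℝ) 1, g x α w τ * hker β₁ β₂ τ)
          - hker β₁ β₂ σ * (∫ τ in Ioo (0:ℝ) 1, g x α w τ * mker β₁ β₂ τ)))
      = 2 * ((∫ σ in Ioo (0:ℝ) 1, g x α w σ * mker β₁ β₂ σ) *
            (∫ σ in Ioo (0:ℝ) 1, hker β₁ β₂ σ)
          - (∫ σ in Ioo (0:ℝ) 1, g x α w σ * hker β₁ β₂ σ) *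
            (∫ σ in Ioo (0:ℝ) 1, mker β₁ β₂ σ)) := by
    have e : (fun σ => ((g x α w σ * mker β₁ β₂ σ) * (∫ τ in Ioo (0:ℝ) 1, hker β₁ β₂ τ)
          - (g x α w σ * hker β₁ β₂ σ) * (∫ τ in Ioo (0:ℝ) 1, mker β₁ β₂ τ)
          - (mker β₁ β₂ σ * (∫ τ in Ioo (0:ℝ) 1, g x α w τ * hker β₁ β₂ τ)
            - hker β₁ β₂ σ * (∫ τ in Ioo (0:ℝ) 1, g x α w τ * mker β₁ β₂ τ))))
        = fun σ => (((∫ τ in Ioo (0:ℝ) 1, hker β₁ β₂ τ) * (g x α w σ * mker β₁ β₂ σ)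
            - (∫ τ in Ioo (0:ℝ) 1, mker β₁ β₂ τ) * (g x α w σ * hker β₁ β₂ σ))
          - ((∫ τ in Ioo (0:ℝ) 1, g x α w τ * hker β₁ β₂ τ) * mker β₁ β₂ σ
            - (∫ τ in Ioo (0:ℝ) 1, g x α w τ * mker β₁ β₂ τ) * hker β₁ β₂ σ)) :=
      funext fun σ => by ring
    have j1 : Integrable (fun σ => (∫ τ in Ioo (0:ℝ) 1, hker β₁ β₂ τ)
        * (g x α w σ * mker β₁ β₂ σ)) (volume.restrict (Ioo (0:ℝ) 1)) := hIgm.const_mul _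
    have j2 : Integrable (fun σ => (∫ τ in Ioo (0:ℝ) 1, mker β₁ β₂ τ)
        * (g x α w σ * hker β₁ β₂ σ)) (volume.restrict (Ioo (0:ℝ) 1)) := hIgh.const_mul _
    have j3 : Integrable (fun σ => (∫ τ in Ioo (0:ℝ) 1, g x α w τ * hker β₁ β₂ τ)
        * mker β₁ β₂ σ) (volume.restrict (Ioo (0:ℝ) 1)) := hIm.const_mul _
    have j4 : Integrable (fun σ => (∫ τ in Ioo (0:ℝ) 1, g x α w τ * mker β₁ β₂ τ)
        * hker β₁ β₂ σ) (volume.restrict (Ioo (0:ℝ) 1)) := hIh.const_mul _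
    have j12 : Integrable (fun σ => (∫ τ in Ioo (0:ℝ) 1, hker β₁ β₂ τ)
        * (g x α w σ * mker β₁ β₂ σ) - (∫ τ in Ioo (0:ℝ) 1, mker β₁ β₂ τ)
        * (g x α w σ * hker β₁ β₂ σ)) (volume.restrict (Ioo (0:ℝ) 1)) := j1.sub j2
    have j34 : Integrable (fun σ => (∫ τ in Ioo (0:ℝ) 1, g x α w τ * hker β₁ β₂ τ)
        * mker β₁ β₂ σ - (∫ τ in Ioo (0:ℝ) 1, g x α w τ * mker β₁ β₂ τ)
        * hker β₁ β₂ σ) (volume.restrict (Ioo (0:ℝ) 1)) := j3.sub j4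
    rw [e, integral_sub j12 j34, integral_sub j1 j2, integral_sub j3 j4,
      integral_const_mul, integral_const_mul, integral_const_mul, integral_const_mul]
    ring
  rw [hsplit] at houter
  linarith

end Slice


section Assembly

open scoped Convolution

variable {x α : ℝ}

/-- the integrand extended by zero. -/
noncomputable def Phi (x α a : ℝ) : ℝ → ℝ :=
  (Ioi (0:ℝ)).indicator (fun t => f x α t * t ^ a)

lemma phi_integrable (hx : 0 < x) (hα : -1 < α) {a : ℝ} (ha : -1 < a) :
    Integrable (Phi x α a) volume :=
  (integrable_f_rpow hx hα ha).integrable_indicator measurableSet_Ioi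

lemma phi_integral (hx : 0 < x) (hα : -1 < α) {a : ℝ} (ha : -1 < a) :
    ∫ t : ℝ, Phi x α a t = F x α a := by
  rw [Phi, integral_indicator measurableSet_Ioi]
  rfl

lemma integrable_g_mul (hx : 0 < x) (hα : -1 < α) {w : ℝ} (hw : 0 < w) {k : ℝ → ℝ}
    (hk : IntegrableOn k (Ioo (0:ℝ) 1)) :
    IntegrableOn (fun σ => g x α w σ * k σ) (Ioo (0:ℝ) 1) := by
  have hgmeas : AEStronglyMeasurable (fun σ => g x α w σ)
      (volume.restrict (Ioo (0:ℝ) 1)) := by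
    apply ContinuousOn.aestronglyMeasurable _ measurableSet_Ioo
    apply ContinuousOn.mul
    · apply (f_contOn hx hα).comp (continuous_const.mul continuous_id).continuousOn
      intro σ hσ
      exact mul_nonneg hw.le hσ.1.le
    · apply (f_contOn hx hα).comp
        (continuous_const.mul (continuous_const.sub continuous_id)).continuousOn
      intro σ hσ
      have : (0:ℝ) ≤ 1 - σ := by linarith [hσ.2]
      exact mul_nonneg hw.le this
  obtain ⟨C, hC⟩ := (isCompact_Icc (a := (0:ℝ)) (b := w)).exists_bound_of_continuousOn
    ((f_contOn hx hα).mono (fun t ht => ht.1))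
  have hgbd : ∀ᵐ σ ∂(volume.restrict (Ioo (0:ℝ) 1)), ‖g x α w σ‖ ≤ C * C := by
    filter_upwards [self_mem_ae_restrict measurableSet_Ioo] with σ hσ
    have hm1 : w * σ ∈ Icc (0:ℝ) w := by
      constructor
      · exact mul_nonneg hw.le hσ.1.le
      · nlinarith [hσ.2]
    have hm2 : w * (1 - σ) ∈ Icc (0:ℝ) w := by
      constructor
      · have : (0:ℝ) ≤ 1 - σ := by linarith [hσ.2]
        exact mul_nonneg hw.le this
      · nlinarith [hσ.1]
    have h1 : ‖f x α (w * σ)‖ ≤ C := hC _ hm1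
    have h2 : ‖f x α (w * (1 - σ))‖ ≤ C := hC _ hm2
    have hC0 : 0 ≤ C := le_trans (norm_nonneg _) h1
    show ‖f x α (w * σ) * f x α (w * (1 - σ))‖ ≤ C * C
    rw [norm_mul]
    exact mul_le_mul h1 h2 (norm_nonneg _) hC0
  exact hk.bdd_mul hgmeas hgbd

lemma conv_fun_eq (x α a b : ℝ) :
    (Phi x α a ⋆[ContinuousLinearMap.mul ℝ ℝ, volume] Phi x α b)
      = fun w => ∫ t : ℝ, Phi x α a t * Phi x α b (w - t) := rfl

lemma conv_zero (x α a b : ℝ) {w : ℝ} (hw : w ≤ 0) :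
    ∫ t : ℝ, Phi x α a t * Phi x α b (w - t) = 0 := by
  have h : (fun t : ℝ => Phi x α a t * Phi x α b (w - t)) = fun _ => (0:ℝ) := by
    funext t
    rcases le_or_gt t 0 with ht | ht
    · have : Phi x α a t = 0 := by
        rw [Phi, indicator_of_notMem]
        simpa using ht
      rw [this, zero_mul]
    · have : Phi x α b (w - t) = 0 := by
        rw [Phi, indicator_of_notMem]
        simp only [mem_Ioi, not_lt]
        linarith
      rw [this, mul_zero]
  rw [h, integral_zero]

lemma conv_eval (hx : 0 < x) (hα : -1 < α) (a b : ℝ) {w : ℝ} (hw : 0 < w) :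
    ∫ t : ℝ, Phi x α a t * Phi x α b (w - t)
      = w ^ (a + b + 1) * ∫ σ in Ioo (0:ℝ) 1, g x α w σ * (σ ^ a * (1 - σ) ^ b) := by
  have hsub := MeasureTheory.Measure.integral_comp_mul_left
    (fun t : ℝ => Phi x α a t * Phi x α b (w - t)) w
  -- hsub : ∫ σ, Phi a (w σ) * Phi b (w - w σ) = |w⁻¹| • ∫ t, Phi a t * Phi b (w - t)
  have habs : |w⁻¹| = w⁻¹ := abs_of_pos (inv_pos.2 hw)
  rw [habs] at hsub
  have hmain : ∫ t : ℝ, Phi x α a t * Phi x α b (w - t)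
      = w * ∫ σ : ℝ, Phi x α a (w * σ) * Phi x α b (w - w * σ) := by
    rw [hsub, smul_eq_mul, ← mul_assoc, mul_inv_cancel₀ hw.ne', one_mul]
  rw [hmain]
  have hind : (fun σ : ℝ => Phi x α a (w * σ) * Phi x α b (w - w * σ))
      = (Ioo (0:ℝ) 1).indicator
          (fun σ => w ^ (a + b) * (g x α w σ * (σ ^ a * (1 - σ) ^ b))) := by
    funext σ
    by_cases hσ : σ ∈ Ioo (0:ℝ) 1
    · rw [indicator_of_mem hσ]
      have hσ0 : 0 < σ := hσ.1
      have hσ1 : 0 < 1 - σ := by linarith [hσ.2]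
      have hw1 : 0 < w * σ := mul_pos hw hσ0
      have hw2 : 0 < w - w * σ := by nlinarith
      rw [Phi, Phi, indicator_of_mem (mem_Ioi.2 hw1), indicator_of_mem (mem_Ioi.2 hw2)]
      have he : w - w * σ = w * (1 - σ) := by ring
      rw [he]
      rw [Real.mul_rpow hw.le hσ0.le, Real.mul_rpow hw.le hσ1.le, Real.rpow_add hw]
      rw [g]
      ring
    · rw [indicator_of_notMem hσ]
      simp only [mem_Ioo, not_and_or, not_lt] at hσ
      rcases hσ with hσ | hσ
      · have : Phi x α a (w * σ) = 0 := by
          rw [Phi, indicator_of_notMem]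
          simp only [mem_Ioi, not_lt]
          exact mul_nonpos_of_nonneg_of_nonpos hw.le hσ
        rw [this, zero_mul]
      · have : Phi x α b (w - w * σ) = 0 := by
          rw [Phi, indicator_of_notMem]
          simp only [mem_Ioi, not_lt]
          nlinarith
        rw [this, mul_zero]
  rw [hind, integral_indicator measurableSet_Ioo, integral_const_mul,
    Real.rpow_add_one hw.ne', Real.rpow_add hw]
  ring

lemma FF_int (hx : 0 < x) (hα : -1 < α) {a b : ℝ} (ha : -1 < a) (hb : -1 < b) :
    Integrable (fun w => ∫ t : ℝ, Phi x α a t * Phi x α b (w - t)) volume := by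
  rw [← conv_fun_eq]
  exact MeasureTheory.Integrable.integrable_convolution (L := ContinuousLinearMap.mul ℝ ℝ)
    (phi_integrable hx hα ha) (phi_integrable hx hα hb)

lemma FF_eq (hx : 0 < x) (hα : -1 < α) {a b : ℝ} (ha : -1 < a) (hb : -1 < b) :
    ∫ w in Ioi (0:ℝ), (∫ t : ℝ, Phi x α a t * Phi x α b (w - t))
      = F x α a * F x α b := by
  have h1 : ∫ w in Ioi (0:ℝ), (∫ t : ℝ, Phi x α a t * Phi x α b (w - t))
      = ∫ w : ℝ, (∫ t : ℝ, Phi x α a t * Phi x α b (w - t)) := by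
    apply setIntegral_eq_integral_of_forall_compl_eq_zero
    intro w hwmem
    simp only [mem_Ioi, not_lt] at hwmem
    exact conv_zero x α a b hwmem
  rw [h1, ← conv_fun_eq]
  rw [integral_convolution (L := ContinuousLinearMap.mul ℝ ℝ) (phi_integrable hx hα ha) (phi_integrable hx hα hb)]
  rw [ContinuousLinearMap.mul_apply', phi_integral hx hα ha, phi_integral hx hα hb]

end Assembly

/-- the midpoint inequality. -/
lemma midpoint_ineq (hx : 0 < x) (hα : -1 < α) {β₁ β₂ : ℝ} (hβ₁ : -1 < β₁) (hβ₂ : -1 < β₂) :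
    M x α β₁ * M x α β₂ ≤ M x α ((β₁ + β₂) / 2) ^ 2 := by
  have hc : -1 < (β₁ + β₂) / 2 := by linarith
  -- symmetrization identities
  have hBh_eq : ∫ σ in Ioo (0:ℝ) 1, hker β₁ β₂ σ
      = ∫ σ in Ioo (0:ℝ) 1, σ ^ β₁ * (1 - σ) ^ β₂ := by
    have hb' : ∫ σ in Ioo (0:ℝ) 1, σ ^ β₂ * (1 - σ) ^ β₁
        = ∫ σ in Ioo (0:ℝ) 1, σ ^ β₁ * (1 - σ) ^ β₂ := by
      have hrefl := refl_integral (fun σ => σ ^ β₁ * (1 - σ) ^ β₂)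
      rw [← hrefl]
      apply setIntegral_congr_fun measurableSet_Ioo
      intro σ hσ
      simp only
      rw [show (1:ℝ) - (1 - σ) = σ from by ring, mul_comm]
    have hsplit : (fun σ : ℝ => hker β₁ β₂ σ)
        = fun σ : ℝ => (σ ^ β₁ * (1 - σ) ^ β₂ + σ ^ β₂ * (1 - σ) ^ β₁) / 2 := rfl
    rw [hsplit]
    rw [integral_div, integral_add (beta_integrable hβ₁ hβ₂) (beta_integrable hβ₂ hβ₁), hb']
    ring
  have hSg_eq : ∀ w : ℝ, 0 < w → (∫ σ in Ioo (0:ℝ) 1, g x α w σ * hker β₁ β₂ σ)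
      = ∫ σ in Ioo (0:ℝ) 1, g x α w σ * (σ ^ β₁ * (1 - σ) ^ β₂) := by
    intro w hw
    have hb' : ∫ σ in Ioo (0:ℝ) 1, g x α w σ * (σ ^ β₂ * (1 - σ) ^ β₁)
        = ∫ σ in Ioo (0:ℝ) 1, g x α w σ * (σ ^ β₁ * (1 - σ) ^ β₂) := by
      have hrefl := refl_integral (fun σ => g x α w σ * (σ ^ β₁ * (1 - σ) ^ β₂))
      rw [← hrefl]
      apply setIntegral_congr_fun measurableSet_Ioo
      intro σ hσ
      simp only [g]
      rw [show (1:ℝ) - (1 - σ) = σ from by ring]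
      ring
    have hsplit : (fun σ : ℝ => g x α w σ * hker β₁ β₂ σ)
        = fun σ : ℝ => (g x α w σ * (σ ^ β₁ * (1 - σ) ^ β₂)
            + g x α w σ * (σ ^ β₂ * (1 - σ) ^ β₁)) / 2 := by
      funext σ
      show g x α w σ * ((σ ^ β₁ * (1 - σ) ^ β₂ + σ ^ β₂ * (1 - σ) ^ β₁) / 2) = _
      ring
    rw [hsplit]
    rw [integral_div, integral_add
      (integrable_g_mul hx hα hw (beta_integrable hβ₁ hβ₂))
      (integrable_g_mul hx hα hw (beta_integrable hβ₂ hβ₁)), hb']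
    ring
  have hBm_val : (∫ σ in Ioo (0:ℝ) 1, mker β₁ β₂ σ)
      = Real.Gamma ((β₁+β₂)/2 + 1) * Real.Gamma ((β₁+β₂)/2 + 1)
        / Real.Gamma (β₁ + β₂ + 2) := by
    have h0 : (fun σ : ℝ => mker β₁ β₂ σ)
        = fun σ : ℝ => σ ^ ((β₁+β₂)/2) * (1 - σ) ^ ((β₁+β₂)/2) := rfl
    rw [h0, beta_integral hc hc]
    congr 1
    ring
  have hg1 : 0 < Real.Gamma (β₁ + 1) := Real.Gamma_pos_of_pos (by linarith)
  have hg2 : 0 < Real.Gamma (β₂ + 1) := Real.Gamma_pos_of_pos (by linarith)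
  have hgc : 0 < Real.Gamma ((β₁+β₂)/2 + 1) := Real.Gamma_pos_of_pos (by linarith)
  have hgs : 0 < Real.Gamma (β₁ + β₂ + 2) := Real.Gamma_pos_of_pos (by linarith)
  have hBm_pos : 0 < ∫ σ in Ioo (0:ℝ) 1, mker β₁ β₂ σ := by
    rw [hBm_val]; positivity
  -- pointwise comparison
  have hpoint : ∀ w ∈ Ioi (0:ℝ),
      (∫ t : ℝ, Phi x α β₁ t * Phi x α β₂ (w - t))
        ≤ ((∫ σ in Ioo (0:ℝ) 1, σ ^ β₁ * (1 - σ) ^ β₂)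
            / (∫ σ in Ioo (0:ℝ) 1, mker β₁ β₂ σ))
          * (∫ t : ℝ, Phi x α ((β₁+β₂)/2) t * Phi x α ((β₁+β₂)/2) (w - t)) := by
    intro w hw
    rw [conv_eval hx hα β₁ β₂ hw, conv_eval hx hα ((β₁+β₂)/2) ((β₁+β₂)/2) hw]
    have hcheb := slice_chebyshev (β₁ := β₁) (β₂ := β₂) hx hα hβ₁ hβ₂ hw
    rw [hSg_eq w hw, hBh_eq] at hcheb
    have hSm_eq : (∫ σ in Ioo (0:ℝ) 1, g x α w σ * mker β₁ β₂ σ)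
        = ∫ σ in Ioo (0:ℝ) 1, g x α w σ * (σ ^ ((β₁+β₂)/2) * (1 - σ) ^ ((β₁+β₂)/2)) := rfl
    rw [hSm_eq] at hcheb
    rw [show (β₁+β₂)/2 + (β₁+β₂)/2 + 1 = β₁ + β₂ + 1 from by ring]
    have hP : 0 ≤ w ^ (β₁ + β₂ + 1) := Real.rpow_nonneg (le_of_lt hw) _
    have hA : (∫ σ in Ioo (0:ℝ) 1, g x α w σ * (σ ^ β₁ * (1 - σ) ^ β₂))
        ≤ ((∫ σ in Ioo (0:ℝ) 1, σ ^ β₁ * (1 - σ) ^ β₂)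
            / (∫ σ in Ioo (0:ℝ) 1, mker β₁ β₂ σ))
          * (∫ σ in Ioo (0:ℝ) 1, g x α w σ * (σ ^ ((β₁+β₂)/2) * (1 - σ) ^ ((β₁+β₂)/2))) := by
      rw [div_mul_eq_mul_div, le_div_iff₀ hBm_pos]
      linarith [hcheb]
    calc w ^ (β₁ + β₂ + 1) * (∫ σ in Ioo (0:ℝ) 1, g x α w σ * (σ ^ β₁ * (1 - σ) ^ β₂))
        ≤ w ^ (β₁ + β₂ + 1) * (((∫ σ in Ioo (0:ℝ) 1, σ ^ β₁ * (1 - σ) ^ β₂)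
            / (∫ σ in Ioo (0:ℝ) 1, mker β₁ β₂ σ))
          * (∫ σ in Ioo (0:ℝ) 1, g x α w σ * (σ ^ ((β₁+β₂)/2) * (1 - σ) ^ ((β₁+β₂)/2)))) :=
          mul_le_mul_of_nonneg_left hA hP
      _ = ((∫ σ in Ioo (0:ℝ) 1, σ ^ β₁ * (1 - σ) ^ β₂)
            / (∫ σ in Ioo (0:ℝ) 1, mker β₁ β₂ σ))
          * (w ^ (β₁ + β₂ + 1) * ∫ σ in Ioo (0:ℝ) 1, g x α w σ
              * (σ ^ ((β₁+β₂)/2) * (1 - σ) ^ ((β₁+β₂)/2))) := by ring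
  -- integrate over w
  have hI1 : IntegrableOn (fun w => ∫ t : ℝ, Phi x α β₁ t * Phi x α β₂ (w - t))
      (Ioi (0:ℝ)) := (FF_int hx hα hβ₁ hβ₂).integrableOn
  have hI2 : IntegrableOn (fun w => ((∫ σ in Ioo (0:ℝ) 1, σ ^ β₁ * (1 - σ) ^ β₂)
        / (∫ σ in Ioo (0:ℝ) 1, mker β₁ β₂ σ))
      * (∫ t : ℝ, Phi x α ((β₁+β₂)/2) t * Phi x α ((β₁+β₂)/2) (w - t)))
      (Ioi (0:ℝ)) := ((FF_int hx hα hc hc).const_mul _).integrableOn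
  have hmono := setIntegral_mono_on hI1 hI2 measurableSet_Ioi hpoint
  rw [FF_eq hx hα hβ₁ hβ₂, integral_const_mul, FF_eq hx hα hc hc] at hmono
  rw [beta_integral hβ₁ hβ₂, hBm_val] at hmono
  have hdiv : Real.Gamma (β₁+1) * Real.Gamma (β₂+1) / Real.Gamma (β₁+β₂+2)
      / (Real.Gamma ((β₁+β₂)/2+1) * Real.Gamma ((β₁+β₂)/2+1) / Real.Gamma (β₁+β₂+2))
      = Real.Gamma (β₁+1) * Real.Gamma (β₂+1)
        / (Real.Gamma ((β₁+β₂)/2+1) * Real.Gamma ((β₁+β₂)/2+1)) := by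
    field_simp
  rw [hdiv, div_mul_eq_mul_div, le_div_iff₀ (by positivity)] at hmono
  -- hmono : F β₁ * F β₂ * (Γc * Γc) ≤ Γ1 * Γ2 * (F c * F c)
  simp only [M]
  rw [div_mul_div_comm, div_pow, div_le_div_iff₀ (by positivity) (by positivity)]
  rw [pow_two, pow_two]
  have hF1 := F_pos hx hα hβ₁
  have hF2 := F_pos hx hα hβ₂
  nlinarith [hmono]

/-- continuity of `M` in `β`. -/
lemma M_contAt (hx : 0 < x) (hα : -1 < α) {β : ℝ} (hβ : -1 < β) :
    ContinuousAt (M x α) β := by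
  have hΓc : ContinuousAt (fun b : ℝ => Real.Gamma (b + 1)) β := by
    have h1 : ContinuousAt Real.Gamma (β + 1) := by
      apply (Real.differentiableAt_Gamma _).continuousAt
      intro m hcon
      have h2 : (0:ℝ) ≤ m := Nat.cast_nonneg m
      have h3 : (0:ℝ) < β + 1 := by linarith
      rw [hcon] at h3
      linarith
    exact ContinuousAt.comp (x := β) (f := fun b : ℝ => b + 1) (g := Real.Gamma)
      h1 (by fun_prop)
  have hFc : ContinuousAt (F x α) β := by
    have hε1 : -1 < β - (β + 1) / 2 := by linarith
    have hε2 : -1 < β + (β + 1) / 2 := by linarith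
    apply MeasureTheory.continuousAt_of_dominated
      (bound := fun t => f x α t * t ^ (β - (β + 1) / 2) + f x α t * t ^ (β + (β + 1) / 2))
    · apply Filter.Eventually.of_forall
      intro b
      apply ContinuousOn.aestronglyMeasurable _ measurableSet_Ioi
      apply ((f_contOn hx hα).mono Ioi_subset_Ici_self).mul
      intro t ht
      exact (Real.continuousAt_rpow_const t b (Or.inl (ne_of_gt ht))).continuousWithinAt
    · have hmem : Ioo (β - (β + 1) / 2) (β + (β + 1) / 2) ∈ nhds β :=
        Ioo_mem_nhds (by linarith) (by linarith)
      apply Filter.eventually_of_mem hmem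
      intro b hb
      filter_upwards [self_mem_ae_restrict measurableSet_Ioi] with t ht
      have ht0 : 0 < t := ht
      have hf0 : 0 ≤ f x α t := (f_pos hx hα ht0.le).le
      rw [Real.norm_of_nonneg (mul_nonneg hf0 (Real.rpow_nonneg ht0.le b))]
      rcases le_total t 1 with h1 | h1
      · have hle : t ^ b ≤ t ^ (β - (β + 1) / 2) :=
          Real.rpow_le_rpow_of_exponent_ge ht0 h1 hb.1.le
        have h2 : 0 ≤ f x α t * t ^ (β + (β + 1) / 2) :=
          mul_nonneg hf0 (Real.rpow_nonneg ht0.le _)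
        nlinarith [mul_le_mul_of_nonneg_left hle hf0]
      · have hle : t ^ b ≤ t ^ (β + (β + 1) / 2) :=
          Real.rpow_le_rpow_of_exponent_le h1 hb.2.le
        have h2 : 0 ≤ f x α t * t ^ (β - (β + 1) / 2) :=
          mul_nonneg hf0 (Real.rpow_nonneg ht0.le _)
        nlinarith [mul_le_mul_of_nonneg_left hle hf0]
    · exact (integrable_f_rpow hx hα hε1).add (integrable_f_rpow hx hα hε2)
    · filter_upwards [self_mem_ae_restrict measurableSet_Ioi] with t ht
      have ht0 : 0 < t := ht
      have he : (fun b : ℝ => f x α t * t ^ b)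
          = fun b => f x α t * Real.exp (Real.log t * b) :=
        funext fun b => by rw [Real.rpow_def_of_pos ht0]
      rw [he]
      fun_prop
  have hΓpos : 0 < Real.Gamma (β + 1) := Real.Gamma_pos_of_pos (by linarith)
  exact hFc.div hΓc hΓpos.ne' 

/-- `volterraMu` equals `M`. -/
lemma volterraMu_eq (x α β : ℝ) : volterraMu x β α = M x α β := by
  rw [M, F, ← integral_div, volterraMu]
  apply setIntegral_congr_fun measurableSet_Ioi
  intro t ht
  simp only [f]
  ring

lemma mem_comb (hβ₁ : -1 < β₁) (hβ₂ : -1 < β₂) {l : ℝ} (hl0 : 0 ≤ l) (hl1 : l ≤ 1) :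
    -1 < l * β₁ + (1 - l) * β₂ := by
  rcases eq_or_lt_of_le hl0 with h | h
  · rw [← h]; norm_num; exact hβ₂
  · nlinarith [mul_lt_mul_of_pos_left hβ₁ h, mul_le_mul_of_nonneg_left hβ₂.le (by linarith : (0:ℝ) ≤ 1 - l)]

lemma M_logconcave (hx : 0 < x) (hα : -1 < α) {β₁ β₂ : ℝ} (hβ₁ : -1 < β₁) (hβ₂ : -1 < β₂)
    {l : ℝ} (hl0 : 0 ≤ l) (hl1 : l ≤ 1) :
    M x α β₁ ^ l * M x α β₂ ^ (1 - l) ≤ M x α (l * β₁ + (1 - l) * β₂) := by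
  have hM₁ : 0 < M x α β₁ := M_pos hx hα hβ₁
  have hM₂ : 0 < M x α β₂ := M_pos hx hα hβ₂
  -- dyadic case
  have key : ∀ n : ℕ, ∀ k : ℕ, k ≤ 2 ^ n →
      M x α β₁ ^ ((k : ℝ) / 2 ^ n) * M x α β₂ ^ (1 - (k : ℝ) / 2 ^ n)
        ≤ M x α (((k : ℝ) / 2 ^ n) * β₁ + (1 - (k : ℝ) / 2 ^ n) * β₂) := by
    intro n
    induction n with
    | zero =>
      intro k hk
      have hk' : k ≤ 1 := by simpa using hk
      interval_cases k
      · push_cast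
        norm_num
      · push_cast
        norm_num
    | succ n ih =>
      intro k hk
      have h2n : (2:ℕ) ^ (n + 1) = 2 ^ n + 2 ^ n := by ring
      rw [h2n] at hk
      set a : ℕ := k / 2 with hadef
      set b : ℕ := k - k / 2 with hbdef
      have hab : a + b = k := by omega
      have ha : a ≤ 2 ^ n := by omega
      have hb : b ≤ 2 ^ n := by omega
      have h1 := ih a ha
      have h2 := ih b hb
      have hla0 : (0:ℝ) ≤ (a : ℝ) / 2 ^ n := by positivity
      have hla1 : (a : ℝ) / 2 ^ n ≤ 1 := by
        rw [div_le_one (by positivity)]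
        exact_mod_cast ha
      have hlb0 : (0:ℝ) ≤ (b : ℝ) / 2 ^ n := by positivity
      have hlb1 : (b : ℝ) / 2 ^ n ≤ 1 := by
        rw [div_le_one (by positivity)]
        exact_mod_cast hb
      have hγ₁ : -1 < ((a : ℝ) / 2 ^ n) * β₁ + (1 - (a : ℝ) / 2 ^ n) * β₂ :=
        mem_comb hβ₁ hβ₂ hla0 hla1
      have hγ₂ : -1 < ((b : ℝ) / 2 ^ n) * β₁ + (1 - (b : ℝ) / 2 ^ n) * β₂ :=
        mem_comb hβ₁ hβ₂ hlb0 hlb1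
      have hmid := midpoint_ineq hx hα hγ₁ hγ₂
      have hcast : (a : ℝ) + (b : ℝ) = (k : ℝ) := by exact_mod_cast hab
      have hl' : ((a : ℝ) / 2 ^ n + (b : ℝ) / 2 ^ n) / 2 = (k : ℝ) / 2 ^ (n + 1) := by
        rw [pow_succ]
        field_simp
        linarith [hcast]
      have hγeq : ((((a : ℝ) / 2 ^ n) * β₁ + (1 - (a : ℝ) / 2 ^ n) * β₂)
            + (((b : ℝ) / 2 ^ n) * β₁ + (1 - (b : ℝ) / 2 ^ n) * β₂)) / 2
          = ((k : ℝ) / 2 ^ (n + 1)) * β₁ + (1 - (k : ℝ) / 2 ^ (n + 1)) * β₂ := by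
        linear_combination (β₁ - β₂) * hl'
      rw [hγeq] at hmid
      -- combine
      have hB : (0:ℝ) < M x α β₁ ^ ((k : ℝ) / 2 ^ (n + 1))
          * M x α β₂ ^ (1 - (k : ℝ) / 2 ^ (n + 1)) :=
        mul_pos (Real.rpow_pos_of_pos hM₁ _) (Real.rpow_pos_of_pos hM₂ _)
      have hlk : -1 < ((k : ℝ) / 2 ^ (n + 1)) * β₁ + (1 - (k : ℝ) / 2 ^ (n + 1)) * β₂ := by
        apply mem_comb hβ₁ hβ₂ (by positivity)
        rw [div_le_one (by positivity)]
        have : (k:ℝ) ≤ ((2^n + 2^n : ℕ) : ℝ) := by exact_mod_cast hk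
        push_cast at this ⊢
        rw [pow_succ]
        linarith
      have hA : (0:ℝ) < M x α (((k : ℝ) / 2 ^ (n + 1)) * β₁
          + (1 - (k : ℝ) / 2 ^ (n + 1)) * β₂) := M_pos hx hα hlk
      have hBsq : (M x α β₁ ^ ((k : ℝ) / 2 ^ (n + 1))
            * M x α β₂ ^ (1 - (k : ℝ) / 2 ^ (n + 1))) ^ 2
          = (M x α β₁ ^ ((a : ℝ) / 2 ^ n) * M x α β₂ ^ (1 - (a : ℝ) / 2 ^ n))
            * (M x α β₁ ^ ((b : ℝ) / 2 ^ n) * M x α β₂ ^ (1 - (b : ℝ) / 2 ^ n)) := by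
        rw [pow_two]
        rw [show M x α β₁ ^ ((k : ℝ) / 2 ^ (n + 1)) * M x α β₂ ^ (1 - (k : ℝ) / 2 ^ (n + 1))
            * (M x α β₁ ^ ((k : ℝ) / 2 ^ (n + 1)) * M x α β₂ ^ (1 - (k : ℝ) / 2 ^ (n + 1)))
          = (M x α β₁ ^ ((k : ℝ) / 2 ^ (n + 1)) * M x α β₁ ^ ((k : ℝ) / 2 ^ (n + 1)))
            * (M x α β₂ ^ (1 - (k : ℝ) / 2 ^ (n + 1))
              * M x α β₂ ^ (1 - (k : ℝ) / 2 ^ (n + 1))) from by ring]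
        rw [← Real.rpow_add hM₁, ← Real.rpow_add hM₂]
        rw [show ((k:ℝ) / 2 ^ (n + 1) + (k:ℝ) / 2 ^ (n + 1) : ℝ)
            = (a:ℝ) / 2 ^ n + (b:ℝ) / 2 ^ n from by linarith [hl'],
          show (1 - (k:ℝ) / 2 ^ (n + 1) + (1 - (k:ℝ) / 2 ^ (n + 1)) : ℝ)
            = (1 - (a:ℝ) / 2 ^ n) + (1 - (b:ℝ) / 2 ^ n) from by linarith [hl'],
          Real.rpow_add hM₁, Real.rpow_add hM₂]
        ring
      have hchain : (M x α β₁ ^ ((k : ℝ) / 2 ^ (n + 1))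
            * M x α β₂ ^ (1 - (k : ℝ) / 2 ^ (n + 1))) ^ 2
          ≤ M x α (((k : ℝ) / 2 ^ (n + 1)) * β₁
              + (1 - (k : ℝ) / 2 ^ (n + 1)) * β₂) ^ 2 := by
        rw [hBsq]
        refine le_trans ?_ hmid
        apply mul_le_mul h1 h2 ?_ ?_
        · positivity
        · exact (M_pos hx hα hγ₁).le
      have hsqrt := Real.sqrt_le_sqrt hchain
      rwa [Real.sqrt_sq hB.le, Real.sqrt_sq hA.le] at hsqrt
  -- approximation of l by dyadic rationals
  have hfloor_le : ∀ n : ℕ, ⌊l * 2 ^ n⌋₊ ≤ 2 ^ n := by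
    intro n
    have h1 : l * 2 ^ n ≤ ((2 ^ n : ℕ) : ℝ) := by
      push_cast
      nlinarith [pow_pos (zero_lt_two (α := ℝ)) n]
    have h2 := Nat.floor_mono h1
    rwa [Nat.floor_natCast] at h2
  have hseq_le : ∀ n : ℕ, (⌊l * 2 ^ n⌋₊ : ℝ) / 2 ^ n ≤ l := by
    intro n
    rw [div_le_iff₀ (by positivity)]
    exact Nat.floor_le (by positivity)
  have hseq_gt : ∀ n : ℕ, l - (1 / 2 : ℝ) ^ n ≤ (⌊l * 2 ^ n⌋₊ : ℝ) / 2 ^ n := by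
    intro n
    have h1 : l * 2 ^ n < ⌊l * 2 ^ n⌋₊ + 1 := Nat.lt_floor_add_one _
    rw [le_div_iff₀ (by positivity : (0:ℝ) < 2 ^ n)]
    have h2 : (l - (1 / 2 : ℝ) ^ n) * 2 ^ n = l * 2 ^ n - 1 := by
      rw [sub_mul, ← mul_pow]; norm_num
    rw [h2]
    linarith
  have htend : Filter.Tendsto (fun n : ℕ => (⌊l * 2 ^ n⌋₊ : ℝ) / 2 ^ n)
      Filter.atTop (nhds l) := by
    apply tendsto_of_tendsto_of_tendsto_of_le_of_le
      (g := fun n : ℕ => l - (1 / 2 : ℝ) ^ n) (h := fun _ : ℕ => l)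
    · have hpow : Filter.Tendsto (fun n : ℕ => ((1 : ℝ) / 2) ^ n) Filter.atTop (nhds 0) :=
        tendsto_pow_atTop_nhds_zero_of_lt_one (by norm_num) (by norm_num)
      have h3 := hpow.const_sub l
      simpa using h3
    · exact tendsto_const_nhds
    · exact hseq_gt
    · exact hseq_le
  have hMexp : ∀ c : ℝ, 0 < c → Continuous fun e : ℝ => c ^ e := by
    intro c hc
    have he : (fun e : ℝ => c ^ e) = fun e => Real.exp (Real.log c * e) :=
      funext fun e => Real.rpow_def_of_pos hc e
    rw [he]
    fun_prop
  have hLHS : Filter.Tendsto (fun n : ℕ => M x α β₁ ^ ((⌊l * 2 ^ n⌋₊ : ℝ) / 2 ^ n)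
      * M x α β₂ ^ (1 - (⌊l * 2 ^ n⌋₊ : ℝ) / 2 ^ n)) Filter.atTop
      (nhds (M x α β₁ ^ l * M x α β₂ ^ (1 - l))) := by
    apply Filter.Tendsto.mul
    · exact ((hMexp _ hM₁).tendsto l).comp htend
    · exact ((hMexp _ hM₂).tendsto (1 - l)).comp (tendsto_const_nhds.sub htend)
  have hmeml : -1 < l * β₁ + (1 - l) * β₂ := mem_comb hβ₁ hβ₂ hl0 hl1
  have hRHS : Filter.Tendsto (fun n : ℕ => M x α (((⌊l * 2 ^ n⌋₊ : ℝ) / 2 ^ n) * β₁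
      + (1 - (⌊l * 2 ^ n⌋₊ : ℝ) / 2 ^ n) * β₂)) Filter.atTop
      (nhds (M x α (l * β₁ + (1 - l) * β₂))) := by
    apply ((M_contAt hx hα hmeml).tendsto).comp
    exact (htend.mul_const β₁).add ((tendsto_const_nhds.sub htend).mul_const β₂)
  exact le_of_tendsto_of_tendsto' hLHS hRHS (fun n => key n _ (hfloor_le n))

end VolterraAux

/-- For fixed `x > 0` and `α > -1`, `β ↦ μ(x, β, α)` is log-concave on `(-1, ∞)`. -/
theorem volterraMu_logConcave_in_beta (x α : ℝ) (hx : 0 < x) (hα : -1 < α) :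
    ∀ β₁ β₂ : ℝ, -1 < β₁ → -1 < β₂ → ∀ l : ℝ, l ∈ Set.Icc (0 : ℝ) 1 →
      volterraMu x β₁ α ^ l * volterraMu x β₂ α ^ (1 - l) ≤
        volterraMu x (l * β₁ + (1 - l) * β₂) α := by
  intro β₁ β₂ hβ₁ hβ₂ l hl
  rw [VolterraAux.volterraMu_eq, VolterraAux.volterraMu_eq, VolterraAux.volterraMu_eq]
  exact VolterraAux.M_logconcave hx hα hβ₁ hβ₂ hl.1 hl.2
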